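/- Let X be a uniformly convex Banach space, {x_n} and {y_n} sequences in X, and φ a nonzero bounded linear functional on X. If for some d ≥ 0, ‖x_n‖ → d and ‖y_n‖ → d, and |φ(x_n + y_n)| → 2d‖φ‖, then ‖x_n − y_n‖ → 0. -/

import Mathlib

theorem uc_sequence2
    {X : Type*} [NormedAddCommGroup X] [NormedSpace ℂ X]
    [UniformConvexSpace X] [CompleteSpace X]
    (x y : ℕ → X) (φ : X →L[ℂ] ℂ) (hφ : φ ≠ 0) (d : ℝ) (hd : 0 ≤ d)
    (hx : Filter.Tendsto (fun n => ‖x n‖) Filter.atTop (nhds d))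
    (hy : Filter.Tendsto (fun n => ‖y n‖) Filter.atTop (nhds d))
    (hxy : Filter.Tendsto (fun n => ‖φ (x n + y n)‖) Filter.atTop
      (nhds (2 * d * ‖φ‖))) :
    Filter.Tendsto (fun n => ‖x n - y n‖) Filter.atTop (nhds 0) := by
  rcases hd.eq_or_lt with rfl | hd0
  · -- d = 0 case
    have h0 : Filter.Tendsto (fun n => ‖x n‖ + ‖y n‖) Filter.atTop (nhds 0) := by
      simpa using hx.add hy
    refine squeeze_zero (fun n => norm_nonneg _) (fun n => ?_) h0
    exact norm_sub_le _ _
  -- d > 0 case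
  have hφpos : 0 < ‖φ‖ := norm_pos_iff.mpr hφ
  -- ‖x n + y n‖ → 2d
  have hsum : Filter.Tendsto (fun n => ‖x n + y n‖) Filter.atTop (nhds (2 * d)) := by
    have hlow : Filter.Tendsto (fun n => ‖φ (x n + y n)‖ / ‖φ‖)
        Filter.atTop (nhds (2 * d)) := by
      have := hxy.div_const ‖φ‖
      rwa [mul_div_assoc, div_self hφpos.ne', mul_one] at this
    have hup : Filter.Tendsto (fun n => ‖x n‖ + ‖y n‖) Filter.atTop (nhds (2 * d)) := by
      have := hx.add hy
      rwa [two_mul]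
    refine tendsto_of_tendsto_of_tendsto_of_le_of_le hlow hup (fun n => ?_) (fun n => ?_)
    · rw [div_le_iff₀ hφpos]
      rw [mul_comm]
      exact φ.le_opNorm _
    · exact norm_add_le _ _
  -- normalized sequences
  set u : ℕ → X := fun n => ‖x n‖⁻¹ • x n with hu
  set v : ℕ → X := fun n => ‖y n‖⁻¹ • y n with hv
  have hxpos : ∀ᶠ n in Filter.atTop, 0 < ‖x n‖ :=
    hx.eventually (eventually_gt_nhds hd0)
  have hypos : ∀ᶠ n in Filter.atTop, 0 < ‖y n‖ :=
    hy.eventually (eventually_gt_nhds hd0)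
  have hun : ∀ᶠ n in Filter.atTop, ‖u n‖ = 1 := by
    filter_upwards [hxpos] with n hn
    simp [hu, norm_smul, abs_of_pos (inv_pos.mpr hn), inv_mul_cancel₀ hn.ne']
  have hvn : ∀ᶠ n in Filter.atTop, ‖v n‖ = 1 := by
    filter_upwards [hypos] with n hn
    simp [hv, norm_smul, abs_of_pos (inv_pos.mpr hn), inv_mul_cancel₀ hn.ne']
  -- errors
  have hux : ∀ᶠ n in Filter.atTop, ‖x n - d • u n‖ = |‖x n‖ - d| := by
    filter_upwards [hxpos] with n hn
    have : x n - d • u n = (‖x n‖ - d) • u n := by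
      rw [sub_smul, hu]
      simp [smul_smul, mul_inv_cancel₀ hn.ne']
    rw [this, norm_smul]
    have h1 : ‖u n‖ = 1 := by
      simp [hu, norm_smul, abs_of_pos (inv_pos.mpr hn), inv_mul_cancel₀ hn.ne']
    rw [h1, mul_one, Real.norm_eq_abs]
  have hvy : ∀ᶠ n in Filter.atTop, ‖y n - d • v n‖ = |‖y n‖ - d| := by
    filter_upwards [hypos] with n hn
    have : y n - d • v n = (‖y n‖ - d) • v n := by
      rw [sub_smul, hv]
      simp [smul_smul, mul_inv_cancel₀ hn.ne']
    rw [this, norm_smul]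
    have h1 : ‖v n‖ = 1 := by
      simp [hv, norm_smul, abs_of_pos (inv_pos.mpr hn), inv_mul_cancel₀ hn.ne']
    rw [h1, mul_one, Real.norm_eq_abs]
  have habsx : Filter.Tendsto (fun n => |‖x n‖ - d|) Filter.atTop (nhds 0) := by
    have := (hx.sub_const d).abs
    simpa using this
  have habsy : Filter.Tendsto (fun n => |‖y n‖ - d|) Filter.atTop (nhds 0) := by
    have := (hy.sub_const d).abs
    simpa using this
  -- ‖u n + v n‖ → 2
  have huv : Filter.Tendsto (fun n => ‖u n + v n‖) Filter.atTop (nhds 2) := by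
    have hlow : Filter.Tendsto
        (fun n => ‖x n + y n‖ / d - |‖x n‖ - d| / d - |‖y n‖ - d| / d)
        Filter.atTop (nhds 2) := by
      have h1 := (hsum.div_const d).sub (habsx.div_const d)
      have h2 := h1.sub (habsy.div_const d)
      have : 2 * d / d - 0 / d - 0 / d = 2 := by
        field_simp
        ring
      rwa [this] at h2
    have hup : Filter.Tendsto (fun n => ‖u n‖ + ‖v n‖) Filter.atTop (nhds 2) := by
      refine Filter.Tendsto.congr' ?_ tendsto_const_nhds
      filter_upwards [hun, hvn] with n h1 h2
      rw [h1, h2]; norm_num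
    refine tendsto_of_tendsto_of_tendsto_of_le_of_le' hlow hup ?_ ?_
    · filter_upwards [hux, hvy] with n h1 h2
      have key : ‖x n + y n‖ ≤ d * ‖u n + v n‖ + |‖x n‖ - d| + |‖y n‖ - d| := by
        have : x n + y n = d • (u n + v n) + (x n - d • u n) + (y n - d • v n) := by
          module
        calc ‖x n + y n‖ ≤ ‖d • (u n + v n)‖ + ‖x n - d • u n‖ + ‖y n - d • v n‖ := by
              rw [this]; exact norm_add₃_le
          _ = d * ‖u n + v n‖ + |‖x n‖ - d| + |‖y n‖ - d| := by
              rw [h1, h2, norm_smul, Real.norm_eq_abs, abs_of_pos hd0]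
      rw [show ‖x n + y n‖ / d - |‖x n‖ - d| / d - |‖y n‖ - d| / d
          = (‖x n + y n‖ - |‖x n‖ - d| - |‖y n‖ - d|) / d by ring,
        div_le_iff₀ hd0]
      nlinarith [key]
    · filter_upwards with n
      exact norm_add_le _ _
  -- ‖u n - v n‖ → 0
  have huvsub : Filter.Tendsto (fun n => ‖u n - v n‖) Filter.atTop (nhds 0) := by
    rw [Metric.tendsto_atTop] at huv ⊢
    intro ε hε
    obtain ⟨δ, hδ, hball⟩ := exists_forall_closed_ball_dist_add_le_two_sub X hε
    obtain ⟨N1, hN1⟩ := huv δ hδ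
    obtain ⟨N2, hN2⟩ : ∃ N, ∀ n ≥ N, ‖u n‖ = 1 ∧ ‖v n‖ = 1 := by
      rw [Filter.eventually_atTop] at hun hvn
      obtain ⟨a, ha⟩ := hun; obtain ⟨b, hb⟩ := hvn
      exact ⟨max a b, fun n hn => ⟨ha n (le_trans (le_max_left _ _) hn),
        hb n (le_trans (le_max_right _ _) hn)⟩⟩
    refine ⟨max N1 N2, fun n hn => ?_⟩
    obtain ⟨h1, h2⟩ := hN2 n (le_trans (le_max_right _ _) hn)
    have h3 := hN1 n (le_trans (le_max_left _ _) hn)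
    rw [Real.dist_eq, sub_zero, abs_of_nonneg (norm_nonneg _)]
    by_contra hcon
    push_neg at hcon
    have := hball h1.le h2.le hcon
    rw [Real.dist_eq] at h3
    have h4 : 2 - ‖u n + v n‖ ≤ |‖u n + v n‖ - 2| := by
      rw [abs_sub_comm]; exact le_abs_self _
    linarith
  -- conclude
  have hfinal : Filter.Tendsto
      (fun n => |‖x n‖ - d| + d * ‖u n - v n‖ + |‖y n‖ - d|)
      Filter.atTop (nhds 0) := by
    have := (habsx.add ((huvsub.const_mul d))).add habsy
    simpa using this
  refine squeeze_zero' (Filter.Eventually.of_forall fun n => norm_nonneg _) ?_ hfinal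
  filter_upwards [hux, hvy] with n h1 h2
  have : x n - y n = (x n - d • u n) + d • (u n - v n) + (d • v n - y n) := by
    module
  calc ‖x n - y n‖ ≤ ‖x n - d • u n‖ + ‖d • (u n - v n)‖ + ‖d • v n - y n‖ := by
        rw [this]; exact norm_add₃_le
    _ = |‖x n‖ - d| + d * ‖u n - v n‖ + |‖y n‖ - d| := by
        rw [h1, norm_smul, Real.norm_eq_abs, abs_of_pos hd0, ← norm_neg (d • v n - y n)]
        simp only [neg_sub]
        rw [h2]
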